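/- Let C be a category with finite limits and let f : X ⟶ Y be an exponentiable arrow in C, i.e., the pullback functor f^* : C/Y ⟶ C/X has a right adjoint f_*. Then the polynomial endofunctor P_f : C ⟶ C defined as the composite C ⟶ C/X ⟶ C/Y ⟶ C (pullback along X ⟶ 1, then f_*, then forgetful functor) preserves pullbacks. -/

import Mathlib

open CategoryTheory CategoryTheory.Limits

noncomputable section

/-- Let `f : X ⟶ Y` be an exponentiable arrow in a category `C` with finite
limits, i.e. the pullback functor `f^* : C/Y ⥤ C/X` has a right adjoint `f_*`.
Then the polynomial endofunctor `P_f = Y_! ∘ f_* ∘ X^* : C ⥤ C` preserves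
pullbacks. -/
theorem polynomial_preserves_pullbacks {C : Type u} [Category.{v} C] [HasFiniteLimits C]
    {X Y : C} (f : X ⟶ Y) (fstar : Over X ⥤ Over Y) (adj : Over.pullback f ⊣ fstar) :
    Nonempty (PreservesLimitsOfShape WalkingCospan
      (Over.star X ⋙ fstar ⋙ Over.forget Y : C ⥤ C)) := by
  have h1 : PreservesLimitsOfShape WalkingCospan (Over.star X) :=
    (Over.forgetAdjStar X).rightAdjoint_preservesLimits.preservesLimitsOfShape
  have h2 : PreservesLimitsOfShape WalkingCospan fstar :=
    adj.rightAdjoint_preservesLimits.preservesLimitsOfShape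
  have h3 : PreservesLimitsOfShape WalkingCospan (Over.forget Y) :=
    preservesLimitOfShape_of_createsLimitsOfShape_and_hasLimitsOfShape _
  exact ⟨comp_preservesLimitsOfShape _ _⟩

end
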